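/- Let P be a set of n points in R^d and h a hyperplane in R^d. If there exists a point c' ∈ h of Tverberg depth r for the orthogonal projection of P onto h, then there exists a point c ∈ R^d of Tverberg depth at least ⌈r/2⌉ for P. -/

import Mathlib

/-- `x` has Tverberg depth `r` with respect to the finite set `Q`. -/
def HasTverbergDepth {d : ℕ} (Q : Finset (EuclideanSpace ℝ (Fin d)))
    (x : EuclideanSpace ℝ (Fin d)) (r : ℕ) : Prop :=
  ∃ f : Fin r → Finset (EuclideanSpace ℝ (Fin d)),
    (∀ i, (f i).Nonempty) ∧
    (∀ i j, i ≠ j → Disjoint (f i) (f j)) ∧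
    (∀ p ∈ Q, ∃ i, p ∈ f i) ∧ (∀ i, f i ⊆ Q) ∧
    ∀ i, x ∈ convexHull ℝ ((f i : Set (EuclideanSpace ℝ (Fin d))))

/-- The orthogonal projection onto the hyperplane `⟪a, x⟫ = b`, as an affine map. -/
noncomputable def liftingProjMap {d : ℕ} (a : EuclideanSpace ℝ (Fin d)) (b : ℝ) :
    EuclideanSpace ℝ (Fin d) →ᵃ[ℝ] EuclideanSpace ℝ (Fin d) where
  toFun x := x - (((inner ℝ a x : ℝ) - b) / ‖a‖ ^ 2) • a
  linear :=
    { toFun := fun x => x - ((inner ℝ a x : ℝ) / ‖a‖ ^ 2) • a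
      map_add' := by
        intro x y
        rw [inner_add_right, add_div, add_smul]
        abel
      map_smul' := by
        intro c x
        rw [inner_smul_right]
        simp only [RingHom.id_apply, smul_sub, smul_smul]
        rw [mul_div_assoc] }
  map_vadd' := by
    intro p v
    simp only [vadd_eq_add, LinearMap.coe_mk, AddHom.coe_mk]
    rw [inner_add_right]
    have : ((inner ℝ a v : ℝ) + (inner ℝ a p : ℝ) - b) / ‖a‖ ^ 2
        = (inner ℝ a v : ℝ) / ‖a‖ ^ 2 + ((inner ℝ a p : ℝ) - b) / ‖a‖ ^ 2 := by ring
    rw [this, add_smul]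
    abel

/-- Lifting lemma: a Tverberg point of depth `r` for the projection of `P` onto a
hyperplane yields a Tverberg point of depth `⌈r/2⌉` for `P`. -/
theorem lifting_lemma (d r : ℕ) [DecidableEq (EuclideanSpace ℝ (Fin d))]
    (a : EuclideanSpace ℝ (Fin d)) (b : ℝ) (ha : a ≠ 0)
    (pr : EuclideanSpace ℝ (Fin d) → EuclideanSpace ℝ (Fin d))
    (hpr : ∀ x, pr x = x - (((inner ℝ a x : ℝ) - b) / ‖a‖ ^ 2) • a)
    (P : Finset (EuclideanSpace ℝ (Fin d)))
    (c' : EuclideanSpace ℝ (Fin d)) (hc' : (inner ℝ a c' : ℝ) = b)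
    (hdepth : HasTverbergDepth (P.image pr) c' r) :
    ∃ c : EuclideanSpace ℝ (Fin d), HasTverbergDepth P c ((r + 1) / 2) := by
  obtain ⟨f, hne, hdis, hcov, hsub, hconv⟩ := hdepth
  rcases Nat.eq_zero_or_pos r with hr | hr
  · -- r = 0 : then P is empty and the statement is trivial.
    subst hr
    have hP : ∀ p, p ∉ P := by
      intro p hp
      obtain ⟨i, -⟩ := hcov (pr p) (Finset.mem_image_of_mem pr hp)
      exact i.elim0
    have hFin : ∀ i : Fin ((0 + 1) / 2), False := fun i => absurd i.isLt (by omega)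
    exact ⟨0, fun i => (hFin i).elim, fun i => (hFin i).elim, fun i j _ => (hFin i).elim,
      fun p hp => absurd hp (hP p), fun i => (hFin i).elim, fun i => (hFin i).elim⟩
  · -- main case : r ≥ 1
    have hprA : ⇑(liftingProjMap a b) = pr := by
      funext y; rw [hpr]; rfl
    set Q : Fin r → Finset (EuclideanSpace ℝ (Fin d)) :=
      fun i => P.filter (fun p => pr p ∈ f i) with hQ
    have hQsub : ∀ i, Q i ⊆ P := fun i => Finset.filter_subset _ _
    have hQmem : ∀ (i : Fin r) (p : EuclideanSpace ℝ (Fin d)),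
        p ∈ Q i ↔ p ∈ P ∧ pr p ∈ f i := by
      intro i p; simp [hQ]
    have hQdis : ∀ i j, i ≠ j → Disjoint (Q i) (Q j) := by
      intro i j hij
      rw [Finset.disjoint_left]
      intro p hpi hpj
      exact Finset.disjoint_left.mp (hdis i j hij) ((hQmem i p).mp hpi).2 ((hQmem j p).mp hpj).2
    have hfQ : ∀ i, (f i : Set (EuclideanSpace ℝ (Fin d)))
        ⊆ pr '' (Q i : Set (EuclideanSpace ℝ (Fin d))) := by
      intro i q hq
      obtain ⟨p, hp, rfl⟩ := Finset.mem_image.mp (hsub i hq)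
      exact ⟨p, (hQmem i p).mpr ⟨hp, hq⟩, rfl⟩
    have hQne : ∀ i, ∃ p, p ∈ Q i := by
      intro i
      obtain ⟨q, hq⟩ := hne i
      obtain ⟨p, hp, -⟩ := hfQ i (Finset.mem_coe.mpr hq)
      exact ⟨p, hp⟩
    have hx : ∀ i, ∃ x ∈ convexHull ℝ (Q i : Set (EuclideanSpace ℝ (Fin d))), pr x = c' := by
      intro i
      have h1 : c' ∈ convexHull ℝ (pr '' (Q i : Set (EuclideanSpace ℝ (Fin d)))) :=
        convexHull_mono (hfQ i) (hconv i)
      rw [← hprA, ← AffineMap.image_convexHull] at h1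
      obtain ⟨x, hx1, hx2⟩ := h1
      exact ⟨x, hx1, by rw [← hprA]; exact hx2⟩
    choose x hxQ hxc using hx
    set t : Fin r → ℝ := fun i => ((inner ℝ a (x i) : ℝ) - b) / ‖a‖ ^ 2 with ht
    have hxt : ∀ i, x i = c' + t i • a := by
      intro i
      have h := hxc i
      rw [hpr] at h
      have h2 : x i - t i • a = c' := h
      rw [← h2]; abel
    set σ := Tuple.sort t with hσ
    have hmono := Tuple.monotone_sort t
    set m : ℝ := t (σ ⟨(r - 1) / 2, by omega⟩) with hm
    set c : EuclideanSpace ℝ (Fin d) := c' + m • a with hc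
    have hs : (r + 1) / 2 ≤ r := by omega
    set idx1 : Fin ((r + 1) / 2) → Fin r := fun k => σ (Fin.castLE hs k) with hidx1
    set idx2 : Fin ((r + 1) / 2) → Fin r :=
      fun k => σ ⟨r - 1 - (k : ℕ), by omega⟩ with hidx2
    have hinj : ∀ (u v : Fin r), (u : ℕ) ≠ (v : ℕ) → σ u ≠ σ v :=
      fun u v h => σ.injective.ne (fun e => h (congrArg Fin.val e))
    refine ⟨c, fun k => Q (idx1 k) ∪ Q (idx2 k), ?_, ?_, ?_, ?_, ?_⟩
    · -- nonempty
      intro k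
      obtain ⟨p, hp⟩ := hQne (idx1 k)
      exact ⟨p, Finset.mem_union_left _ hp⟩
    · -- disjoint
      intro k k' hkk'
      have hk1 := k.isLt
      have hk2 := k'.isLt
      have hv : (k : ℕ) ≠ (k' : ℕ) := fun h => hkk' (Fin.ext h)
      simp only [Finset.disjoint_union_left, Finset.disjoint_union_right]
      refine ⟨⟨hQdis _ _ (hinj _ _ ?_), hQdis _ _ (hinj _ _ ?_)⟩,
              ⟨hQdis _ _ (hinj _ _ ?_), hQdis _ _ (hinj _ _ ?_)⟩⟩
      · show (k : ℕ) ≠ (k' : ℕ); omega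
      · show r - 1 - (k : ℕ) ≠ (k' : ℕ); omega
      · show (k : ℕ) ≠ r - 1 - (k' : ℕ); omega
      · show r - 1 - (k : ℕ) ≠ r - 1 - (k' : ℕ); omega
    · -- covering
      intro p hp
      obtain ⟨i, hi⟩ := hcov (pr p) (Finset.mem_image_of_mem pr hp)
      have hpQ : p ∈ Q i := (hQmem i p).mpr ⟨hp, hi⟩
      have hσj : σ (σ.symm i) = i := Equiv.apply_symm_apply σ i
      have hjr : ((σ.symm i : Fin r) : ℕ) < r := (σ.symm i).isLt
      by_cases hcase : ((σ.symm i : Fin r) : ℕ) < (r + 1) / 2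
      · refine ⟨⟨(σ.symm i : Fin r), hcase⟩, Finset.mem_union_left _ ?_⟩
        have h1 : Fin.castLE hs ⟨((σ.symm i : Fin r) : ℕ), hcase⟩ = σ.symm i :=
          Fin.ext rfl
        have he : idx1 ⟨((σ.symm i : Fin r) : ℕ), hcase⟩ = i :=
          (congrArg σ h1).trans hσj
        rw [he]
        exact hpQ
      · have hk : r - 1 - ((σ.symm i : Fin r) : ℕ) < (r + 1) / 2 := by omega
        refine ⟨⟨r - 1 - ((σ.symm i : Fin r) : ℕ), hk⟩, Finset.mem_union_right _ ?_⟩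
        have h1 : (⟨r - 1 - (r - 1 - ((σ.symm i : Fin r) : ℕ)), by omega⟩ : Fin r)
            = σ.symm i := by
          refine Fin.ext ?_
          show r - 1 - (r - 1 - ((σ.symm i : Fin r) : ℕ)) = ((σ.symm i : Fin r) : ℕ)
          omega
        have he : idx2 ⟨r - 1 - ((σ.symm i : Fin r) : ℕ), hk⟩ = i :=
          (congrArg σ h1).trans hσj
        rw [he]
        exact hpQ
    · -- subsets
      intro k
      exact Finset.union_subset (hQsub _) (hQsub _)
    · -- convexity
      intro k
      have hk := k.isLt
      have h1 : t (idx1 k) ≤ m := by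
        refine hmono ?_
        rw [Fin.le_def]
        show (k : ℕ) ≤ (r - 1) / 2
        omega
      have h2 : m ≤ t (idx2 k) := by
        refine hmono ?_
        rw [Fin.le_def]
        show (r - 1) / 2 ≤ r - 1 - (k : ℕ)
        omega
      set φ : ℝ →ᵃ[ℝ] EuclideanSpace ℝ (Fin d) := AffineMap.lineMap c' (c' + a) with hφdef
      have hφ : ∀ s : ℝ, φ s = c' + s • a := by
        intro s
        rw [hφdef, AffineMap.lineMap_apply]
        simp only [vsub_eq_sub, vadd_eq_add, add_sub_cancel_left]
        abel
      have hseg : c ∈ segment ℝ (x (idx1 k)) (x (idx2 k)) := by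
        rw [hxt (idx1 k), hxt (idx2 k), ← hφ, ← hφ, ← image_segment ℝ φ]
        exact ⟨m, by rw [segment_eq_Icc (h1.trans h2)]; exact ⟨h1, h2⟩, hφ m⟩
      have hu1 : x (idx1 k) ∈ convexHull ℝ
          ((Q (idx1 k) ∪ Q (idx2 k) : Finset _) : Set (EuclideanSpace ℝ (Fin d))) := by
        refine convexHull_mono ?_ (hxQ (idx1 k))
        exact_mod_cast Finset.coe_subset.mpr Finset.subset_union_left
      have hu2 : x (idx2 k) ∈ convexHull ℝ
          ((Q (idx1 k) ∪ Q (idx2 k) : Finset _) : Set (EuclideanSpace ℝ (Fin d))) := by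
        refine convexHull_mono ?_ (hxQ (idx2 k))
        exact_mod_cast Finset.coe_subset.mpr Finset.subset_union_right
      exact (convex_convexHull ℝ _).segment_subset hu1 hu2 hseg
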